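/- Let X be an extended quasi-metric space for which the infimum of the distances d(a,b) over pairs of distinct points a ≠ b is strictly positive. Then for any distinct a, b ∈ X, the distance d(a,b) equals the minimum of the set A_{a,b} = { d(x_0,x_1) + … + d(x_{k−1},x_k) : a = x_0, b = x_k, and x_{i−1}, x_i are adjacent for i = 1,…,k } when this set is nonempty, and d(a,b) = ∞ when A_{a,b} is empty. -/

import Mathlib

/-! Core definitions: magnitude (co)homology of generalised metric spaces. -/

open scoped ENNReal NNReal Classical
noncomputable section

/-- A generalised metric space (extended pseudo-quasi-metric space):
a set with a distance in `[0,∞]` satisfying `d x x = 0` and the triangle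
inequality, but not necessarily symmetry or separation. -/
structure GMS (X : Type*) where
  d : X → X → ℝ≥0∞
  d_self : ∀ x, d x x = 0
  d_triangle : ∀ x y z, d x z ≤ d x y + d y z

variable {X : Type*}

/-- An extended quasi-metric space: distinct points are at nonzero distance. -/
def GMS.Quasi (M : GMS X) : Prop := ∀ x y, M.d x y = 0 → x = y

/-- Consecutive entries of the tuple are distinct, i.e. it is a simplex. -/
def SepTuple {k : ℕ} (x : Fin (k + 1) → X) : Prop :=
  ∀ i : Fin k, x i.castSucc ≠ x i.succ

/-- The length of a tuple: the sum of consecutive distances. -/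
def GMS.len (M : GMS X) {k : ℕ} (x : Fin (k + 1) → X) : ℝ≥0∞ :=
  ∑ i : Fin k, M.d (x i.castSucc) (x i.succ)

/-- A `k`-simplex of length `ℓ` in the generalised metric space `M`. -/
structure MSimplex (M : GMS X) (k : ℕ) (ℓ : ℝ≥0) where
  pts : Fin (k + 1) → X
  sep : SepTuple pts
  len_eq : M.len pts = (ℓ : ℝ≥0∞)

/-- The magnitude chain group `MC_{k,ℓ}`: the free abelian group on the
`k`-simplices of length `ℓ`. -/
abbrev MC (M : GMS X) (k : ℕ) (ℓ : ℝ≥0) := MSimplex M k ℓ →₀ ℤ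

/-- The magnitude cochain group `MC^k_ℓ = Hom(MC_{k,ℓ}, ℤ)`, identified with
the group of all `ℤ`-valued functions on `k`-simplices of length `ℓ`. -/
abbrev MCo (M : GMS X) (k : ℕ) (ℓ : ℝ≥0) := MSimplex M k ℓ → ℤ

/-- Remove the `(j+1)`-st point (an inner point) from a tuple. -/
def faceTuple {k : ℕ} (x : Fin (k + 2) → X) (j : Fin k) : Fin (k + 1) → X :=
  x ∘ Fin.succAbove ⟨j.val + 1, by have := j.isLt; omega⟩

/-- The condition under which the inner face `∂_{j+1}` of a simplex is a simplex
of the same length: the removed point lies on a geodesic between its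
neighbours (and, redundantly in quasi-metric spaces, the face is again a
simplex of the same length). -/
def GMS.FaceOK (M : GMS X) {k : ℕ} {ℓ : ℝ≥0} (s : MSimplex M (k + 1) ℓ) (j : Fin k) : Prop :=
  M.d (s.pts ⟨j.val, by have := j.isLt; omega⟩) (s.pts ⟨j.val + 2, by have := j.isLt; omega⟩) =
      M.d (s.pts ⟨j.val, by have := j.isLt; omega⟩) (s.pts ⟨j.val + 1, by have := j.isLt; omega⟩) +
      M.d (s.pts ⟨j.val + 1, by have := j.isLt; omega⟩) (s.pts ⟨j.val + 2, by have := j.isLt; omega⟩)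
    ∧ SepTuple (faceTuple s.pts j) ∧ M.len (faceTuple s.pts j) = (ℓ : ℝ≥0∞)

/-- The inner face `∂_{j+1}` of a simplex, when defined. -/
def GMS.face (M : GMS X) {k : ℕ} {ℓ : ℝ≥0} (s : MSimplex M (k + 1) ℓ) (j : Fin k)
    (h : M.FaceOK s j) : MSimplex M k ℓ :=
  ⟨faceTuple s.pts j, h.2.1, h.2.2⟩

/-- The magnitude coboundary `∂^* : MC^k_ℓ → MC^{k+1}_ℓ`, dual to the
differential `∂ = -∂_1 + ∂_2 - ⋯ + (-1)^k ∂_k`. -/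
def MCoDelta (M : GMS X) (k : ℕ) (ℓ : ℝ≥0) : MCo M k ℓ →ₗ[ℤ] MCo M (k + 1) ℓ where
  toFun φ := fun s => ∑ j : Fin k, (-1 : ℤ) ^ (j.val + 1) *
      (if h : M.FaceOK s j then φ (M.face s j h) else 0)
  map_add' φ ψ := by
    funext s
    simp only [Pi.add_apply]
    rw [← Finset.sum_add_distrib]
    refine Finset.sum_congr rfl fun j _ => ?_
    split <;> ring
  map_smul' z φ := by
    funext s
    simp only [Pi.smul_apply, smul_eq_mul, RingHom.id_apply]
    rw [Finset.mul_sum]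
    refine Finset.sum_congr rfl fun j _ => ?_
    split <;> ring

/-- Magnitude cocycles in bidegree `(k, ℓ)`. -/
def MCocycle (M : GMS X) (k : ℕ) (ℓ : ℝ≥0) : Submodule ℤ (MCo M k ℓ) :=
  LinearMap.ker (MCoDelta M k ℓ)

/-- Magnitude coboundaries in bidegree `(k, ℓ)` (zero in degree `0`). -/
def MCobound (M : GMS X) : (k : ℕ) → (ℓ : ℝ≥0) → Submodule ℤ (MCo M k ℓ)
  | 0, _ => ⊥
  | (k + 1), ℓ => LinearMap.range (MCoDelta M k ℓ)

/-- The magnitude cohomology group `MH^k_ℓ(X)`: cocycles modulo coboundaries. -/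
abbrev MagCohomology (M : GMS X) (k : ℕ) (ℓ : ℝ≥0) :=
  MCocycle M k ℓ ⧸ (MCobound M k ℓ).comap (MCocycle M k ℓ).subtype

/-- The cohomology class of a cochain (zero if it is not a cocycle). -/
def cohClass (M : GMS X) {k : ℕ} {ℓ : ℝ≥0} (φ : MCo M k ℓ) : MagCohomology M k ℓ :=
  if h : φ ∈ MCocycle M k ℓ then Submodule.Quotient.mk ⟨φ, h⟩ else 0

/-- A representative cocycle of a magnitude cohomology class. -/
def MHout (M : GMS X) {k : ℕ} {ℓ : ℝ≥0} (α : MagCohomology M k ℓ) : MCo M k ℓ :=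
  ((Submodule.Quotient.mk_surjective _) α).choose.val

/-- The first `j+1` points of a `(j+k)`-simplex. -/
def frontT (j k : ℕ) (x : Fin (j + k + 1) → X) : Fin (j + 1) → X :=
  fun i => x ⟨i.val, by have := i.isLt; omega⟩

/-- The last `k+1` points of a `(j+k)`-simplex. -/
def backT (j k : ℕ) (x : Fin (j + k + 1) → X) : Fin (k + 1) → X :=
  fun i => x ⟨j + i.val, by have := i.isLt; omega⟩

lemma SepTuple.front {j k : ℕ} {x : Fin (j + k + 1) → X} (h : SepTuple x) :
    SepTuple (frontT j k x) := by
  intro i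
  have hi := i.isLt
  exact h ⟨i.val, by omega⟩

lemma SepTuple.back {j k : ℕ} {x : Fin (j + k + 1) → X} (h : SepTuple x) :
    SepTuple (backT j k x) := by
  intro i
  have hi := i.isLt
  exact h ⟨j + i.val, by omega⟩

/-- The product of magnitude cochains:
`(φ·ψ)(x_0,…,x_{j+k}) = φ(x_0,…,x_j) · ψ(x_j,…,x_{j+k})`,
where a cochain of length-degree `ℓ` vanishes on simplices of other lengths. -/
def MCup (M : GMS X) {j k : ℕ} {ℓ m : ℝ≥0} (φ : MCo M j ℓ) (ψ : MCo M k m) :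
    MCo M (j + k) (ℓ + m) :=
  fun s =>
    if h : M.len (frontT j k s.pts) = (ℓ : ℝ≥0∞) ∧ M.len (backT j k s.pts) = (m : ℝ≥0∞) then
      φ ⟨frontT j k s.pts, s.sep.front, h.1⟩ * ψ ⟨backT j k s.pts, s.sep.back, h.2⟩
    else 0

/-- The unit cochain `u ∈ MC^0_0`, with `u(x_0) = 1`. -/
def MCoUnit (M : GMS X) : MCo M 0 0 := fun _ => 1

/-- Transport of magnitude cohomology classes along equalities of bidegrees. -/
def MHcast (M : GMS X) {k k' : ℕ} {ℓ ℓ' : ℝ≥0} (hk : k = k') (hl : ℓ = ℓ')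
    (α : MagCohomology M k ℓ) : MagCohomology M k' ℓ' := hk ▸ hl ▸ α

/-- Transport of magnitude cochains along equalities of bidegrees. -/
def MCoCast (M : GMS X) {k k' : ℕ} {ℓ ℓ' : ℝ≥0} (hk : k = k') (hl : ℓ = ℓ')
    (φ : MCo M k ℓ) : MCo M k' ℓ' := hk ▸ hl ▸ φ

/-- The product on magnitude cohomology induced by the product of cochains. -/
def MHmul (M : GMS X) {j k : ℕ} {ℓ m : ℝ≥0} (α : MagCohomology M j ℓ)
    (β : MagCohomology M k m) : MagCohomology M (j + k) (ℓ + m) :=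
  cohClass M (MCup M (MHout M α) (MHout M β))

/-- The unit of the magnitude cohomology ring. -/
def MHone (M : GMS X) : MagCohomology M 0 0 := cohClass M (MCoUnit M)

/-- Two points are adjacent: their distance is nonzero and finite, and no
third point lies strictly between them. -/
def GMS.Adjacent (M : GMS X) (x y : X) : Prop :=
  M.d x y ≠ 0 ∧ M.d x y ≠ ∞ ∧ ∀ a, M.d x y = M.d x a + M.d a y → a = x ∨ a = y

/-- An isomorphism of magnitude cohomology rings: a family of additive
isomorphisms respecting both gradings, the product, and the unit. -/
def MHRingIso {Y : Type*} (M : GMS X) (M' : GMS Y) : Prop :=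
  ∃ e : ∀ (k : ℕ) (ℓ : ℝ≥0), MagCohomology M k ℓ ≃+ MagCohomology M' k ℓ,
    (e 0 0 (MHone M) = MHone M') ∧
    ∀ (j k : ℕ) (ℓ m : ℝ≥0) (α : MagCohomology M j ℓ) (β : MagCohomology M k m),
      e (j + k) (ℓ + m) (MHmul M α β) = MHmul M' (e j ℓ α) (e k m β)


/-- The set `A_{a,b}` of lengths of chains from `a` to `b` whose consecutive
entries are adjacent. -/
def Achain (M : GMS X) (a b : X) : Set ℝ≥0∞ :=
  {c | ∃ (k : ℕ) (x : Fin (k + 1) → X), x 0 = a ∧ x (Fin.last k) = b ∧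
    (∀ i : Fin k, M.Adjacent (x i.castSucc) (x i.succ)) ∧ c = M.len x}

/-- Triangle inequality along a tuple. -/
lemma GMS.d_le_len' (M : GMS X) : ∀ (k : ℕ) (x : Fin (k + 1) → X),
    M.d (x 0) (x (Fin.last k)) ≤ M.len x := by
  intro k
  induction k with
  | zero => intro x; simp [GMS.len, M.d_self]
  | succ k ih =>
    intro x
    have h1 : M.len x = M.len (x ∘ Fin.castSucc) +
        M.d (x (Fin.last k).castSucc) (x (Fin.last (k + 1))) := by
      simp only [GMS.len, Fin.sum_univ_castSucc, Function.comp_apply, Fin.succ_last,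
        Fin.succ_castSucc]
    have h2 := ih (x ∘ Fin.castSucc)
    have h3 : (x ∘ Fin.castSucc) 0 = x 0 := by
      simp [Fin.castSucc_zero]
    have h4 : (x ∘ Fin.castSucc) (Fin.last k) = x (Fin.last k).castSucc := rfl
    calc M.d (x 0) (x (Fin.last (k + 1)))
        ≤ M.d (x 0) (x (Fin.last k).castSucc) +
          M.d (x (Fin.last k).castSucc) (x (Fin.last (k + 1))) :=
          M.d_triangle _ _ _
      _ ≤ M.len (x ∘ Fin.castSucc) +
          M.d (x (Fin.last k).castSucc) (x (Fin.last (k + 1))) := by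
          refine add_le_add_left ?_ _
          rw [← h3, ← h4]; exact h2
      _ = M.len x := h1.symm

/-- Concatenation of adjacent chains. -/
lemma Achain.add {M : GMS X} {a c b : X} {u v : ℝ≥0∞}
    (hu : u ∈ Achain M a c) (hv : v ∈ Achain M c b) : u + v ∈ Achain M a b := by
  obtain ⟨j, x, hx0, hxl, hxadj, rfl⟩ := hu
  obtain ⟨k, y, hy0, hyl, hyadj, rfl⟩ := hv
  refine ⟨j + k, fun i => if h : i.val < j then x ⟨i.val, by omega⟩
    else y ⟨i.val - j, by have := i.isLt; omega⟩, ?_, ?_, ?_, ?_⟩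
  case _ =>
    by_cases hj : 0 < j
    · simp only [Fin.val_zero, hj, dif_pos]
      rw [← hx0]
      exact (dif_pos hj).trans (congrArg x (by ext; simp))
    · have hj0 : j = 0 := by omega
      subst hj0
      simp only [Fin.val_zero, Nat.lt_irrefl, dif_neg, not_false_iff]
      have h0 : (⟨0 - 0, by omega⟩ : Fin (k + 1)) = 0 := by ext; simp
      refine (dif_neg (by simp)).trans ?_
      rw [h0, hy0, ← hxl, ← hx0, Fin.last_zero]
  case _ =>
    have : ¬ ((Fin.last (j + k)).val < j) := by simp [Fin.last]
    simp only [this, dif_neg, not_false_iff]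
    rw [← hyl]
    congr 1
    ext
    simp [Fin.last]
  case _ =>
    intro i
    have hzx : ∀ (v : ℕ) (h1 : v < j + k + 1) (h2 : v ≤ j),
        (if h : v < j then x ⟨v, by omega⟩ else y ⟨v - j, by omega⟩) = x ⟨v, by omega⟩ := by
      intro v h1 h2
      by_cases h : v < j
      · simp [h]
      · have hv : v = j := by omega
        subst hv
        simp only [lt_irrefl, dif_neg, not_false_iff]
        rw [← hxl] at hy0
        have h0 : (⟨v - v, by omega⟩ : Fin (k + 1)) = 0 := by ext; simp
        rw [h0, hy0]
        congr 1
    have hzy : ∀ (w : ℕ) (h1 : j + w < j + k + 1),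
        (if h : j + w < j then x ⟨j + w, by omega⟩ else y ⟨j + w - j, by omega⟩)
          = y ⟨w, by omega⟩ := by
      intro w h1
      have h : ¬ (j + w < j) := by omega
      simp only [h, dif_neg, not_false_iff]
      congr 1
      ext
      simp
    by_cases hij : i.val + 1 ≤ j
    · have e1 : (i.castSucc : Fin (j + k + 1)).val = i.val := rfl
      have e2 : (i.succ : Fin (j + k + 1)).val = i.val + 1 := rfl
      have a1 := hzx i.val (by omega) (by omega)
      have a2 := hzx (i.val + 1) (by omega) hij
      simp only [e1, e2]
      rw [a1, a2]
      have := hxadj ⟨i.val, by omega⟩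
      convert this using 2 <;> ext <;> simp
    · have hw : i.val = j + (i.val - j) := by omega
      set w := i.val - j with hwdef
      have hwk : w < k := by have := i.isLt; omega
      have e1 : (i.castSucc : Fin (j + k + 1)).val = i.val := rfl
      have e2 : (i.succ : Fin (j + k + 1)).val = i.val + 1 := rfl
      have b1 : (if h : i.val < j then x ⟨i.val, by omega⟩
          else y ⟨i.val - j, by have := i.isLt; omega⟩) = y ⟨w, by omega⟩ := by
        have h : ¬ (i.val < j) := by omega
        simp only [h, dif_neg, not_false_iff]
        rfl
      have b2 : (if h : i.val + 1 < j then x ⟨i.val + 1, by omega⟩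
          else y ⟨i.val + 1 - j, by have := i.isLt; omega⟩) = y ⟨w + 1, by omega⟩ := by
        have h : ¬ (i.val + 1 < j) := by omega
        simp only [h, dif_neg, not_false_iff]
        congr 1
        ext
        simp; omega
      simp only [e1, e2]
      rw [b1, b2]
      have := hyadj ⟨w, hwk⟩
      convert this using 2 <;> ext <;> simp
  case _ =>
    have hzx : ∀ (v : ℕ) (h1 : v < j + k + 1) (h2 : v ≤ j),
        (if h : v < j then x ⟨v, by omega⟩ else y ⟨v - j, by omega⟩) = x ⟨v, by omega⟩ := by
      intro v h1 h2
      by_cases h : v < j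
      · simp [h]
      · have hv : v = j := by omega
        subst hv
        simp only [lt_irrefl, dif_neg, not_false_iff]
        rw [← hxl] at hy0
        have h0 : (⟨v - v, by omega⟩ : Fin (k + 1)) = 0 := by ext; simp
        rw [h0, hy0]
        congr 1
    have hzy : ∀ (w : ℕ) (h1 : j + w < j + k + 1),
        (if h : j + w < j then x ⟨j + w, by omega⟩ else y ⟨j + w - j, by omega⟩)
          = y ⟨w, by omega⟩ := by
      intro w h1
      have h : ¬ (j + w < j) := by omega
      simp only [h, dif_neg, not_false_iff]
      congr 1
      ext
      simp
    show _ = M.len _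
    simp only [GMS.len]
    rw [Fin.sum_univ_add (f := fun i : Fin (j + k) =>
      M.d (if h : (i.castSucc).val < j then x ⟨(i.castSucc).val, by omega⟩
            else y ⟨(i.castSucc).val - j, by have := (i.castSucc).isLt; omega⟩)
          (if h : (i.succ).val < j then x ⟨(i.succ).val, by omega⟩
            else y ⟨(i.succ).val - j, by have := (i.succ).isLt; omega⟩))]
    congr 1
    · refine Finset.sum_congr rfl fun i _ => ?_
      have e1 : ((Fin.castAdd k i).castSucc : Fin (j + k + 1)).val = i.val := rfl
      have e2 : ((Fin.castAdd k i).succ : Fin (j + k + 1)).val = i.val + 1 := rfl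
      simp only [e1, e2]
      rw [hzx i.val (by omega) (by omega), hzx (i.val + 1) (by omega) (by omega)]
      congr 1 <;> · congr 1; ext; simp
    · refine Finset.sum_congr rfl fun i _ => ?_
      have e1 : ((Fin.natAdd j i).castSucc : Fin (j + k + 1)).val = j + i.val := rfl
      have e2 : ((Fin.natAdd j i).succ : Fin (j + k + 1)).val = j + i.val + 1 := rfl
      simp only [e1, e2]
      rw [hzy i.val (by omega)]
      have h : ¬ (j + i.val + 1 < j) := by omega
      simp only [h, dif_neg, not_false_iff]
      have c1 : (⟨i.val, by have := i.isLt; omega⟩ : Fin (k + 1)) = i.castSucc := by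
        ext; simp
      have c2 : (⟨j + i.val + 1 - j, by have := i.isLt; omega⟩ : Fin (k + 1)) = i.succ := by
        ext; simp only [Fin.val_succ]; omega
      rw [c1, c2]

/-- Lengths of adjacent chains are finite. -/
lemma Achain.ne_top {M : GMS X} {a b : X} {u : ℝ≥0∞} (hu : u ∈ Achain M a b) : u ≠ ∞ := by
  obtain ⟨k, x, hx0, hxl, hxadj, rfl⟩ := hu
  simp only [GMS.len]
  refine (ENNReal.sum_lt_top.mpr fun i _ => ?_).ne
  exact lt_top_iff_ne_top.mpr (hxadj i).2.1

/-- The distance is a lower bound for `Achain`. -/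
lemma Achain.d_le {M : GMS X} {a b : X} {u : ℝ≥0∞} (hu : u ∈ Achain M a b) :
    M.d a b ≤ u := by
  obtain ⟨k, x, hx0, hxl, hxadj, rfl⟩ := hu
  rw [← hx0, ← hxl]
  exact M.d_le_len' k x

/-- Key existence lemma: finite distances are achieved by adjacent chains. -/
lemma chain_exists (M : GMS X) (hq : M.Quasi) (ε : ℝ≥0∞) (hε0 : ε ≠ 0) (hεtop : ε ≠ ∞)
    (hε : ∀ x y : X, x ≠ y → ε ≤ M.d x y) :
    ∀ n : ℕ, ∀ a b : X, a ≠ b → M.d a b ≤ n * ε → M.d a b ∈ Achain M a b := by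
  intro n
  induction n using Nat.strong_induction_on with
  | _ n ih =>
  intro a b hab hle
  have hd0 : M.d a b ≠ 0 := fun h => hab (hq a b h)
  have hdtop : M.d a b ≠ ∞ := by
    intro h
    rw [h, top_le_iff] at hle
    exact (ENNReal.mul_ne_top (ENNReal.natCast_ne_top n) hεtop) hle
  by_cases hadj : M.Adjacent a b
  · refine ⟨1, ![a, b], rfl, rfl, fun i => ?_, ?_⟩
    · fin_cases i
      simpa using hadj
    · simp [GMS.len]
  · have hex : ∃ c, M.d a b = M.d a c + M.d c b ∧ c ≠ a ∧ c ≠ b := by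
      unfold GMS.Adjacent at hadj
      push_neg at hadj
      obtain ⟨c, hc1, hc2⟩ := hadj hd0 hdtop
      exact ⟨c, hc1, hc2⟩
    obtain ⟨c, hsum, hca, hcb⟩ := hex
    have hac : a ≠ c := fun h => hca h.symm
    have hεac : ε ≤ M.d a c := hε a c hac
    have hεcb : ε ≤ M.d c b := hε c b hcb
    obtain ⟨m, rfl⟩ : ∃ m, n = m + 1 := by
      rcases n with _ | m
      · exfalso
        have := (hε a b hab).trans hle
        simp at this
        exact hε0 this
      · exact ⟨m, rfl⟩
    have hnε : ((m + 1 : ℕ) : ℝ≥0∞) * ε = m * ε + ε := by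
      push_cast
      ring
    have hle' : M.d a c + M.d c b ≤ (m : ℝ≥0∞) * ε + ε := by
      rw [← hnε, ← hsum]; exact hle
    have h1 : M.d a c ≤ m * ε := by
      have : M.d a c + ε ≤ m * ε + ε :=
        le_trans (add_le_add_right hεcb _) hle'
      exact ENNReal.le_of_add_le_add_right hεtop this
    have h2 : M.d c b ≤ m * ε := by
      have : ε + M.d c b ≤ ε + m * ε := by
        calc ε + M.d c b ≤ M.d a c + M.d c b := add_le_add_left hεac _
          _ ≤ m * ε + ε := hle'
          _ = ε + m * ε := by ring
      exact ENNReal.le_of_add_le_add_left hεtop this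
    have hmem1 := ih m (by omega) a c hac h1
    have hmem2 := ih m (by omega) c b hcb h2
    rw [hsum]
    exact Achain.add hmem1 hmem2

/-- If `X` is an extended quasi-metric space in which the infimum of the
distances between distinct points is strictly positive, then for distinct
`a, b` the distance `d(a,b)` is the minimum of `A_{a,b}` when that set is
nonempty, and `d(a,b) = ∞` when it is empty. -/
theorem dist_eq_min_adjacent_chains (M : GMS X) (hq : M.Quasi)
    (hpos : 0 < ⨅ (a : X) (b : X) (_ : a ≠ b), M.d a b)
    (a b : X) (hab : a ≠ b) :
    ((Achain M a b).Nonempty → IsLeast (Achain M a b) (M.d a b)) ∧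
    (¬ (Achain M a b).Nonempty → M.d a b = ∞) := by
  set ι := ⨅ (a : X) (b : X) (_ : a ≠ b), M.d a b with hι
  set ε := min ι 1 with hεdef
  have hε0 : ε ≠ 0 := by
    have : 0 < ε := lt_min hpos zero_lt_one
    exact this.ne'
  have hεtop : ε ≠ ∞ := by
    have : ε ≤ 1 := min_le_right _ _
    exact (this.trans_lt ENNReal.one_lt_top).ne
  have hε : ∀ x y : X, x ≠ y → ε ≤ M.d x y := by
    intro x y hxy
    refine (min_le_left _ _).trans ?_
    exact iInf_le_of_le x (iInf_le_of_le y (iInf_le _ hxy))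
  have key : M.d a b ≠ ∞ → M.d a b ∈ Achain M a b := by
    intro hdtop
    have hdiv : M.d a b / ε ≠ ∞ := (ENNReal.div_lt_top hdtop hε0).ne
    obtain ⟨n, hn⟩ := ENNReal.exists_nat_gt hdiv
    refine chain_exists M hq ε hε0 hεtop hε n a b hab ?_
    calc M.d a b = M.d a b / ε * ε := (ENNReal.div_mul_cancel hε0 hεtop).symm
      _ ≤ (n : ℝ≥0∞) * ε := mul_le_mul_left hn.le _
  constructor
  · rintro ⟨u, hu⟩
    have hdtop : M.d a b ≠ ∞ := ((Achain.d_le hu).trans_lt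
      (lt_top_iff_ne_top.mpr (Achain.ne_top hu))).ne
    exact ⟨key hdtop, fun v hv => Achain.d_le hv⟩
  · intro hne
    by_contra hdtop
    exact hne ⟨M.d a b, key hdtop⟩

end
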